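/- arXiv:1909.13137 — 4 statements merged into one kernel-verified Lean document; each statement's English description precedes it below -/
import Mathlib

section
/- Let λ, a ∈ ℂ with λ ≠ 0. The function G(z) = λ sin(z) − z + a has infinitely many zeros in ℂ; equivalently, f(z) = λ sin(z) + a has infinitely many fixed points. -/
open Complex Metric Filter

lemma log_lip {u v : ℂ} (hu : u ∈ Metric.closedBall (1:ℂ) (1/2))
    (hv : v ∈ Metric.closedBall (1:ℂ) (1/2)) :
    ‖Complex.log u - Complex.log v‖ ≤ 2 * ‖u - v‖ := by
  have hd : ∀ x ∈ Metric.closedBall (1:ℂ) (1/2),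
      HasDerivWithinAt Complex.log x⁻¹ (Metric.closedBall (1:ℂ) (1/2)) x := by
    intro x hx
    rw [Metric.mem_closedBall, Complex.dist_eq] at hx
    have h2 : |(x - 1).re| ≤ 1/2 := le_trans (Complex.abs_re_le_norm _) hx
    rw [Complex.sub_re, Complex.one_re] at h2
    have hre : (0:ℝ) < x.re := by
      rcases abs_le.1 h2 with ⟨h, _⟩; linarith
    exact (Complex.hasDerivAt_log (Or.inl hre)).hasDerivWithinAt
  have hb : ∀ x ∈ Metric.closedBall (1:ℂ) (1/2), ‖(x:ℂ)⁻¹‖ ≤ 2 := by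
    intro x hx
    rw [Metric.mem_closedBall, dist_eq_norm] at hx
    have hn : (1:ℝ)/2 ≤ ‖x‖ := by
      have h := norm_sub_norm_le (1:ℂ) x
      rw [norm_sub_rev] at h
      simp only [norm_one] at h
      linarith
    rw [norm_inv]
    rw [inv_le_comm₀ (by linarith) (by norm_num)]
    linarith
  exact Convex.norm_image_sub_le_of_norm_hasDerivWithin_le hd hb
    (convex_closedBall _ _) hv hu

lemma exists_fp (lam a : ℂ) (hlam : lam ≠ 0) (k : ℕ)
    {w : ℂ} (hw : w = 2 * Complex.I * (((2*Real.pi*k : ℝ) : ℂ) - a) / lam)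
    (h1 : 1 ≤ ‖w‖)
    (h2 : 2*(1 + Real.pi + Real.log ‖w‖)/‖lam‖ + Real.exp 1/‖w‖ ≤ ‖w‖/2)
    (h3 : 2/‖lam‖ + Real.exp 1/‖w‖ ≤ ‖w‖/8) :
    ∃ z : ℂ, lam * Complex.sin z + a = z ∧
      2*Real.pi*k - (2 + Real.pi + Real.log ‖w‖) ≤ ‖z‖ := by
  have hL : (0:ℝ) < ‖lam‖ := norm_pos_iff.2 hlam
  set M : ℝ := ‖w‖ with hM
  have hM0 : (0:ℝ) < M := by linarith
  have hw0 : w ≠ 0 := norm_pos_iff.1 hM0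
  have hlogM : 0 ≤ Real.log M := Real.log_nonneg h1
  set b : ℂ := ((2*Real.pi*k : ℝ) : ℂ) with hb
  set ζ : ℂ := b - Complex.I * Complex.log w with hζ
  set g : ℂ → ℂ := fun z => 2*Complex.I*(z - a)/lam + Complex.exp (-(Complex.I*z)) with hg
  set B : Set ℂ := Metric.closedBall ζ 1 with hB
  set Sf : ℂ → ℂ := fun z => ζ - Complex.I * Complex.log (g z / w) with hSf
  -- exp(I ζ) = w
  have hexpζ : Complex.exp (Complex.I * ζ) = w := by
    have h0 : Complex.I * ζ = ((k:ℤ) : ℂ) * (2 * (Real.pi:ℂ) * Complex.I) + Complex.log w := by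
      rw [hζ, hb]; push_cast; ring_nf; rw [Complex.I_sq]; ring
    rw [h0, Complex.exp_add, Complex.exp_int_mul_two_pi_mul_I, one_mul, Complex.exp_log hw0]
  -- imaginary part of ζ
  have hζim : ζ.im = - Real.log M := by
    rw [hζ]
    simp only [Complex.sub_im, Complex.mul_im, Complex.I_re, Complex.I_im, hb,
      Complex.log_re, Complex.ofReal_im, one_mul, zero_mul, zero_sub]
    rw [hM]; ring
  -- ‖ζ - b‖
  have hζb : ‖ζ - b‖ ≤ Real.log M + Real.pi := by
    have : ζ - b = -(Complex.I * Complex.log w) := by rw [hζ]; ring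
    rw [this, norm_neg, norm_mul, Complex.norm_I, one_mul]
    refine le_trans (Complex.norm_le_abs_re_add_abs_im _) ?_
    rw [Complex.log_re, Complex.log_im, ← hM,
      _root_.abs_of_nonneg hlogM]
    exact add_le_add_right (Complex.abs_arg_le_pi w) _
  -- bound on exp(-(I z)) on B
  have hexp_small : ∀ z ∈ B, ‖Complex.exp (-(Complex.I*z))‖ ≤ Real.exp 1 / M := by
    intro z hz
    rw [Metric.mem_closedBall] at hz
    have him : |z.im - ζ.im| ≤ 1 := by
      have h := Complex.abs_im_le_norm (z - ζ)
      rw [Complex.sub_im] at h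
      rw [← Complex.dist_eq] at h
      exact le_trans h hz
    have hz_im : z.im ≤ 1 - Real.log M := by
      rcases abs_le.1 him with ⟨_, h2⟩
      rw [hζim] at h2; linarith
    rw [Complex.norm_exp]
    have : (-(Complex.I*z)).re = z.im := by
      simp [Complex.neg_re, Complex.mul_re, Complex.I_re, Complex.I_im]
    rw [this]
    calc Real.exp z.im ≤ Real.exp (1 - Real.log M) := Real.exp_le_exp.2 hz_im
      _ = Real.exp 1 / M := by rw [Real.exp_sub, Real.exp_log hM0]
  -- g z - w bound
  have hgw : ∀ z ∈ B, ‖g z - w‖ ≤ M/2 := by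
    intro z hz
    have hzb : ‖z - b‖ ≤ 1 + (Real.log M + Real.pi) := by
      calc ‖z - b‖ = ‖(z - ζ) + (ζ - b)‖ := by ring_nf
        _ ≤ ‖z - ζ‖ + ‖ζ - b‖ := norm_add_le _ _
        _ ≤ 1 + (Real.log M + Real.pi) := by
            refine add_le_add ?_ hζb
            rw [← dist_eq_norm]; exact Metric.mem_closedBall.1 hz
    have hdecomp : g z - w = 2*Complex.I*(z - b)/lam + Complex.exp (-(Complex.I*z)) := by
      rw [hg, hw]; field_simp; ring
    rw [hdecomp]
    calc ‖2*Complex.I*(z - b)/lam + Complex.exp (-(Complex.I*z))‖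
        ≤ ‖2*Complex.I*(z - b)/lam‖ + ‖Complex.exp (-(Complex.I*z))‖ := norm_add_le _ _
      _ ≤ 2*‖z - b‖/‖lam‖ + Real.exp 1 / M := by
          refine add_le_add ?_ (hexp_small z hz)
          have hnorm : ‖2*Complex.I*(z-b)/lam‖ = 2*‖z-b‖/‖lam‖ := by
            rw [norm_div, norm_mul, norm_mul, Complex.norm_I, mul_one]
            norm_num
          rw [hnorm]
      _ ≤ 2*(1 + Real.pi + Real.log M)/‖lam‖ + Real.exp 1 / M := by
          gcongr; linarith
      _ ≤ M/2 := h2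
  -- g z / w in ball around 1
  have hg_ball : ∀ z ∈ B, g z / w ∈ Metric.closedBall (1:ℂ) (1/2) := by
    intro z hz
    rw [Metric.mem_closedBall, dist_eq_norm]
    have : g z / w - 1 = (g z - w)/w := by field_simp
    rw [this, norm_div]
    rw [div_le_iff₀ hM0]
    calc ‖g z - w‖ ≤ M/2 := hgw z hz
      _ = 1/2 * ‖w‖ := by rw [← hM]; ring
  -- maps to
  have hmaps : Set.MapsTo Sf B B := by
    intro z hz
    rw [hB, Metric.mem_closedBall, dist_eq_norm]
    have h5 : Sf z - ζ = -(Complex.I * Complex.log (g z / w)) := by rw [hSf]; ring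
    rw [h5, norm_neg, norm_mul, Complex.norm_I, one_mul]
    have hu : ‖g z / w - 1‖ ≤ 1/2 := by
      have := hg_ball z hz
      rwa [Metric.mem_closedBall, dist_eq_norm] at this
    have h6 : Complex.log (g z / w) = Complex.log (1 + (g z / w - 1)) := by ring_nf
    rw [h6]
    calc ‖Complex.log (1 + (g z / w - 1))‖ ≤ 3/2 * ‖g z / w - 1‖ :=
          Complex.norm_log_one_add_half_le_self hu
      _ ≤ 3/2 * (1/2) := by gcongr
      _ ≤ 1 := by norm_num
  -- Lipschitz bound for exp(-(I z)) on B
  have hexp_lip : ∀ z₁ ∈ B, ∀ z₂ ∈ B,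
      ‖Complex.exp (-(Complex.I*z₁)) - Complex.exp (-(Complex.I*z₂))‖
        ≤ (Real.exp 1 / M) * ‖z₁ - z₂‖ := by
    intro z₁ h₁ z₂ h₂
    refine Convex.norm_image_sub_le_of_norm_hasDerivWithin_le
      (f := fun z => Complex.exp (-(Complex.I*z)))
      (f' := fun z => -Complex.I * Complex.exp (-(Complex.I*z))) (s := B)
      (fun x _ => ?_) (fun x hx => ?_) (by rw [hB]; exact convex_closedBall _ _) h₂ h₁
    · have hinner : HasDerivAt (fun z : ℂ => -(Complex.I*z)) (-Complex.I) x := by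
        simpa using ((hasDerivAt_id x).const_mul (-Complex.I))
      have := hinner.cexp
      refine HasDerivAt.hasDerivWithinAt ?_
      exact this.congr_deriv (by beta_reduce; ring)
    · rw [norm_mul, norm_neg, Complex.norm_I, one_mul]
      exact hexp_small x hx
  -- Lipschitz of Sf
  have hSlip : ∀ z₁ ∈ B, ∀ z₂ ∈ B, dist (Sf z₁) (Sf z₂) ≤ (1/2) * dist z₁ z₂ := by
    intro z₁ h₁ z₂ h₂
    rw [dist_eq_norm, dist_eq_norm]
    have h7 : Sf z₁ - Sf z₂
        = -(Complex.I * (Complex.log (g z₁ / w) - Complex.log (g z₂ / w))) := by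
      rw [hSf]; ring
    rw [h7, norm_neg, norm_mul, Complex.norm_I, one_mul]
    have h8 : ‖Complex.log (g z₁ / w) - Complex.log (g z₂ / w)‖
        ≤ 2 * ‖g z₁ / w - g z₂ / w‖ := log_lip (hg_ball z₁ h₁) (hg_ball z₂ h₂)
    have h9 : ‖g z₁ / w - g z₂ / w‖ = ‖g z₁ - g z₂‖ / M := by
      rw [div_sub_div_same, norm_div, hM]
    have h10 : ‖g z₁ - g z₂‖ ≤ (2/‖lam‖ + Real.exp 1 / M) * ‖z₁ - z₂‖ := by
      have hd : g z₁ - g z₂ = 2*Complex.I*(z₁ - z₂)/lam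
          + (Complex.exp (-(Complex.I*z₁)) - Complex.exp (-(Complex.I*z₂))) := by
        rw [hg]; field_simp; ring
      rw [hd]
      calc ‖2*Complex.I*(z₁ - z₂)/lam
          + (Complex.exp (-(Complex.I*z₁)) - Complex.exp (-(Complex.I*z₂)))‖
          ≤ ‖2*Complex.I*(z₁ - z₂)/lam‖
            + ‖Complex.exp (-(Complex.I*z₁)) - Complex.exp (-(Complex.I*z₂))‖ :=
            norm_add_le _ _
        _ ≤ 2*‖z₁ - z₂‖/‖lam‖ + (Real.exp 1 / M) * ‖z₁ - z₂‖ := by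
            refine add_le_add ?_ (hexp_lip z₁ h₁ z₂ h₂)
            have hnorm : ‖2*Complex.I*(z₁-z₂)/lam‖ = 2*‖z₁-z₂‖/‖lam‖ := by
              rw [norm_div, norm_mul, norm_mul, Complex.norm_I, mul_one]
              norm_num
            rw [hnorm]
        _ = (2/‖lam‖ + Real.exp 1 / M) * ‖z₁ - z₂‖ := by ring
    calc ‖Complex.log (g z₁ / w) - Complex.log (g z₂ / w)‖
        ≤ 2 * (‖g z₁ - g z₂‖ / M) := by rw [← h9]; exact h8
      _ ≤ 2 * (((2/‖lam‖ + Real.exp 1 / M) * ‖z₁ - z₂‖) / M) := by gcongr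
      _ ≤ 2 * ((M/8 * ‖z₁ - z₂‖) / M) := by gcongr
      _ = (1/4) * ‖z₁ - z₂‖ := by field_simp; ring
      _ ≤ (1/2) * ‖z₁ - z₂‖ := by
          have := norm_nonneg (z₁ - z₂); linarith
  -- Banach fixed point
  have hsc : IsComplete B := (Metric.isClosed_closedBall).isComplete
  have hcontr : ContractingWith (1/2 : NNReal) (hmaps.restrict Sf B B) := by
    constructor
    · simpa using NNReal.half_lt_self one_ne_zero
    · refine LipschitzWith.of_dist_le_mul fun x y => ?_
      calc dist (hmaps.restrict Sf B B x) (hmaps.restrict Sf B B y)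
          = dist (Sf x.1) (Sf y.1) := by
            rw [Subtype.dist_eq, Set.MapsTo.val_restrict_apply, Set.MapsTo.val_restrict_apply]
        _ ≤ 1/2 * dist x.1 y.1 := hSlip x.1 x.2 y.1 y.2
        _ = ((1/2 : NNReal) : ℝ) * dist x y := by rw [Subtype.dist_eq]; norm_num
  have hζB : ζ ∈ B := by rw [hB]; exact Metric.mem_closedBall_self (by norm_num)
  obtain ⟨z, hzB, hfix, -, -⟩ :=
    ContractingWith.exists_fixedPoint' hsc hmaps hcontr hζB (edist_ne_top _ _)
  -- derive fixed point equation
  have hgz0 : g z ≠ 0 := by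
    intro h0
    have := hgw z hzB
    rw [h0, zero_sub, norm_neg, ← hM] at this
    linarith
  have hexpz : Complex.exp (Complex.I * z) = g z := by
    have h11 : Complex.I * z = Complex.I * ζ + Complex.log (g z / w) := by
      conv_lhs => rw [← hfix]
      rw [hSf]
      simp only []
      have : Complex.I * (ζ - Complex.I * Complex.log (g z / w))
          = Complex.I * ζ + Complex.log (g z / w) := by
        have hI : Complex.I * Complex.I = -1 := Complex.I_mul_I
        ring_nf
        rw [Complex.I_sq]
        ring
      exact this
    rw [h11, Complex.exp_add, hexpζ, Complex.exp_log (div_ne_zero hgz0 hw0)]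
    field_simp
  have heq : lam * Complex.sin z + a = z := by
    have e1 : lam * (Complex.exp (z * Complex.I) - Complex.exp (-(z * Complex.I)))
        = 2 * Complex.I * (z - a) := by
      have h12 : Complex.exp (z * Complex.I)
          = 2*Complex.I*(z - a)/lam + Complex.exp (-(z * Complex.I)) := by
        rw [show z * Complex.I = Complex.I * z by ring, hexpz, hg]
      rw [h12]
      field_simp
      ring
    rw [Complex.sin]
    have hI : Complex.I * Complex.I = -1 := Complex.I_mul_I
    field_simp
    linear_combination (-Complex.I) * e1 + (-2*(z-a)) * hI
  refine ⟨z, heq, ?_⟩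
  -- norm lower bound
  have hzb2 : ‖z - b‖ ≤ 1 + (Real.log M + Real.pi) := by
    calc ‖z - b‖ = ‖(z - ζ) + (ζ - b)‖ := by ring_nf
      _ ≤ ‖z - ζ‖ + ‖ζ - b‖ := norm_add_le _ _
      _ ≤ 1 + (Real.log M + Real.pi) := by
          refine add_le_add ?_ hζb
          rw [← dist_eq_norm]; exact Metric.mem_closedBall.1 hzB
  have hbnorm : ‖b‖ = 2*Real.pi*k := by
    rw [hb, Complex.norm_real]
    exact _root_.abs_of_nonneg (by positivity)
  have := norm_sub_norm_le b (b - z)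
  simp only [sub_sub_cancel] at this
  rw [norm_sub_rev] at hzb2
  calc 2*Real.pi*(k:ℝ) - (2 + Real.pi + Real.log M)
      ≤ ‖b‖ - ‖b - z‖ := by rw [hbnorm]; linarith
    _ ≤ ‖z‖ := this

theorem infinitely_many_fixed_points (lam a : ℂ) (hlam : lam ≠ 0) :
    {z : ℂ | lam * Complex.sin z + a = z}.Infinite := by
  have hL : (0:ℝ) < ‖lam‖ := norm_pos_iff.2 hlam
  set L : ℝ := ‖lam‖ with hLdef
  set Mf : ℕ → ℝ := fun k => ‖2 * Complex.I * (((2*Real.pi*k : ℝ) : ℂ) - a) / lam‖ with hMf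
  set C : ℝ := 2*(2*Real.pi + ‖a‖)/L with hC
  have hπ : (0:ℝ) < Real.pi := Real.pi_pos
  have hC0 : 0 < C := by positivity
  have hMfeq : ∀ k : ℕ, Mf k = 2 * ‖((2*Real.pi*k : ℝ) : ℂ) - a‖ / L := by
    intro k
    rw [hMf]
    simp only []
    rw [norm_div, norm_mul, norm_mul, Complex.norm_I, mul_one]
    rw [hLdef]
    norm_num
  have hbn : ∀ k : ℕ, ‖((2*Real.pi*k : ℝ) : ℂ)‖ = 2*Real.pi*k := by
    intro k
    rw [Complex.norm_real]
    exact abs_of_nonneg (by positivity)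
  have mlo : ∀ k : ℕ, 2*(2*Real.pi*k - ‖a‖)/L ≤ Mf k := by
    intro k
    rw [hMfeq k]
    have h := norm_sub_norm_le (((2*Real.pi*k : ℝ) : ℂ)) a
    rw [hbn k] at h
    gcongr
  have mhi : ∀ k : ℕ, Mf k ≤ C*(k+1) := by
    intro k
    rw [hMfeq k, hC]
    have h := norm_sub_le (((2*Real.pi*k : ℝ) : ℂ)) a
    rw [hbn k] at h
    have h2 : ‖((2*Real.pi*k : ℝ) : ℂ) - a‖ ≤ (2*Real.pi + ‖a‖)*(k+1) := by
      refine le_trans h ?_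
      have hk : (k:ℝ) ≤ k + 1 := by linarith
      have h3 : ‖a‖ ≤ ‖a‖ * (k+1) := by
        nlinarith [norm_nonneg a, Nat.cast_nonneg (α := ℝ) k]
      nlinarith [Nat.cast_nonneg (α := ℝ) k]
    calc 2 * ‖((2*Real.pi*k : ℝ) : ℂ) - a‖ / L ≤ 2 * ((2*Real.pi + ‖a‖)*(k+1)) / L := by gcongr
      _ = 2*(2*Real.pi + ‖a‖)/L*(k+1) := by ring
  have hlog : ∀ k : ℕ, 1 ≤ Mf k → Real.log (Mf k) ≤ Real.log C + k := by
    intro k hk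
    calc Real.log (Mf k) ≤ Real.log (C*(k+1)) := by
          refine Real.log_le_log (by linarith) (mhi k)
      _ = Real.log C + Real.log (k+1) := by
          rw [Real.log_mul (ne_of_gt hC0) (by positivity)]
      _ ≤ Real.log C + k := by
          have := Real.log_le_sub_one_of_pos (x := (k:ℝ)+1) (by positivity)
          linarith
  -- tendsto facts
  have T : Tendsto (fun k : ℕ => 2*(2*Real.pi*k - ‖a‖)/L) atTop atTop := by
    have h1 : Tendsto (fun k : ℕ => (k:ℝ)) atTop atTop := tendsto_natCast_atTop_atTop
    have h2 := (h1.const_mul_atTop (show (0:ℝ) < 4*Real.pi/L by positivity))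
    have h3 := tendsto_atTop_add_const_right atTop (-(2*‖a‖/L)) h2
    refine h3.congr fun k => by field_simp; ring
  have key : ∀ R : ℝ, ∃ z : ℂ, (lam * Complex.sin z + a = z) ∧ R ≤ ‖z‖ := by
    intro R
    have E1 : ∀ᶠ k : ℕ in atTop, 1 ≤ Mf k :=
      (T.eventually_ge_atTop 1).mono fun k hk => le_trans hk (mlo k)
    have E3 : ∀ᶠ k : ℕ in atTop, 2/L + Real.exp 1/(Mf k) ≤ (Mf k)/8 := by
      filter_upwards [E1, (T.eventually_ge_atTop (8*(2/L + Real.exp 1))).mono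
        (fun k hk => le_trans hk (mlo k))] with k h1 h8
      have he : Real.exp 1/(Mf k) ≤ Real.exp 1 := by
        rw [div_le_iff₀ (by linarith)]
        nlinarith [Real.exp_pos 1]
      have : 2/L + Real.exp 1 ≤ Mf k / 8 := by linarith
      linarith
    have T2 : Tendsto (fun k : ℕ =>
        (2*Real.pi*k - ‖a‖) - (2*(1 + Real.pi + Real.log C + k) + Real.exp 1 * L)) atTop atTop := by
      have h1 : Tendsto (fun k : ℕ => (k:ℝ)) atTop atTop := tendsto_natCast_atTop_atTop
      have h2 := (h1.const_mul_atTop (show (0:ℝ) < 2*Real.pi - 2 by nlinarith [Real.pi_gt_three]))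
      have h3 := tendsto_atTop_add_const_right atTop
        (-‖a‖ - 2*(1 + Real.pi + Real.log C) - Real.exp 1 * L) h2
      refine h3.congr fun k => by ring
    have E2 : ∀ᶠ k : ℕ in atTop,
        2*(1 + Real.pi + Real.log (Mf k))/L + Real.exp 1/(Mf k) ≤ (Mf k)/2 := by
      filter_upwards [E1, T2.eventually_ge_atTop 0] with k h1 h2
      have hlogk := hlog k h1
      have he : Real.exp 1/(Mf k) ≤ Real.exp 1 := by
        rw [div_le_iff₀ (by linarith)]
        nlinarith [Real.exp_pos 1]
      have hml := mlo k
      have hdiv : 2*(1 + Real.pi + Real.log (Mf k))/L ≤ 2*(1 + Real.pi + Real.log C + k)/L := by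
        rw [div_le_div_iff₀ hL hL]
        nlinarith [hlogk]
      have hrhs : (2*(2*Real.pi*k - ‖a‖)/L)/2 ≤ (Mf k)/2 := by linarith
      have hmid : 2*(1 + Real.pi + Real.log C + k)/L + Real.exp 1
          ≤ (2*(2*Real.pi*k - ‖a‖)/L)/2 := by
        have hnum : 2*(1 + Real.pi + Real.log C + (k:ℝ)) + Real.exp 1 * L
            ≤ 2*Real.pi*k - ‖a‖ := by linarith
        rw [div_add' _ _ _ (ne_of_gt hL),
          show (2*(2*Real.pi*(k:ℝ) - ‖a‖)/L)/2 = (2*Real.pi*(k:ℝ) - ‖a‖)/L from by ring,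
          div_le_div_iff₀ hL hL]
        nlinarith [hnum]
      linarith
    have T3 : Tendsto (fun k : ℕ =>
        2*Real.pi*k - (2 + Real.pi + Real.log C + k)) atTop atTop := by
      have h1 : Tendsto (fun k : ℕ => (k:ℝ)) atTop atTop := tendsto_natCast_atTop_atTop
      have h2 := (h1.const_mul_atTop (show (0:ℝ) < 2*Real.pi - 1 by nlinarith [Real.pi_gt_three]))
      have h3 := tendsto_atTop_add_const_right atTop (-(2 + Real.pi + Real.log C)) h2
      refine h3.congr fun k => by ring
    have E4 : ∀ᶠ k : ℕ in atTop, R ≤ 2*Real.pi*k - (2 + Real.pi + Real.log (Mf k)) := by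
      filter_upwards [E1, T3.eventually_ge_atTop R] with k h1 h4
      have hlogk := hlog k h1
      linarith
    obtain ⟨k, h1, h2, h3, h4⟩ := (E1.and (E2.and (E3.and E4))).exists
    obtain ⟨z, hz, hzn⟩ := exists_fp lam a hlam k rfl h1 h2 h3
    exact ⟨z, hz, h4.trans hzn⟩
  by_contra hinf
  rw [Set.not_infinite] at hinf
  obtain ⟨Cb, hCb⟩ := (hinf.image (fun z => ‖z‖)).bddAbove
  obtain ⟨z, hz, hzn⟩ := key (Cb + 1)
  have : ‖z‖ ≤ Cb := hCb (Set.mem_image_of_mem _ hz)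
  linarith
end

section
/- Let λ, a ∈ ℂ with |a| > 1, |λ| > 1, and let y, v ∈ ℝ with |v| > |y| + |a| and sinh(|y|) > 3|a|. Suppose y' and v' are reals with |y'| ≤ |λ| cosh(|y|) and |v'| ≥ |λ| sinh(|v|) − 2|a|. Then |v'| > |y'| + |a|. -/
theorem inductive_step_large_a (lam a : ℂ) (ha : ‖a‖ > 1)
    (hlam : ‖lam‖ > 1) (y v y' v' : ℝ)
    (hv : |v| > |y| + ‖a‖)
    (hy : Real.sinh |y| > 3 * ‖a‖)
    (hy' : |y'| ≤ ‖lam‖ * Real.cosh |y|)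
    (hv' : |v'| ≥ ‖lam‖ * Real.sinh |v| - 2 * ‖a‖) :
    |v'| > |y'| + ‖a‖ := by
  have h1 : Real.sinh |v| > Real.sinh (|y| + ‖a‖) := Real.sinh_lt_sinh.mpr hv
  rw [Real.sinh_add] at h1
  have h2 : (1:ℝ) < Real.sinh (‖a‖) :=
    lt_trans ha ((Real.self_lt_sinh_iff.mpr (by linarith)))
  have h3 := Real.one_le_cosh (‖a‖)
  have h4 := Real.one_le_cosh |y|
  have h5 : Real.sinh |y| > 0 := Real.sinh_pos_iff.mpr (abs_pos.mpr (fun h => by simp [h, Real.sinh_zero] at hy; nlinarith))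
  nlinarith [mul_lt_mul_of_pos_left h1 (by linarith : (0:ℝ) < ‖lam‖),
    mul_le_mul_of_nonneg_left h3 h5.le,
    mul_le_mul_of_nonneg_left h2.le (by linarith : (0:ℝ) ≤ Real.cosh |y|),
    mul_lt_mul_of_pos_left hy (by linarith : (0:ℝ) < ‖lam‖)]
end

section
/- Let λ, a ∈ ℂ with 0 < |a| < 1, |λ| > 1, and let y, v ∈ ℝ with |v| > |y| + |a|, cosh(|y|) > 4, and |λ| e^{−|y|} < |a|. Suppose y' and v' are reals with |y'| ≤ |λ| cosh(|y|) and |v'| ≥ |λ| sinh(|v|) − 2|a|. Then |v'| > |y'| + |a|. -/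
theorem inductive_step_small_a (lam a : ℂ) (ha0 : 0 < ‖a‖)
    (ha : ‖a‖ < 1) (hlam : ‖lam‖ > 1) (y v y' v' : ℝ)
    (hv : |v| > |y| + ‖a‖)
    (hcosh : Real.cosh |y| > 4)
    (hexp : ‖lam‖ * Real.exp (-|y|) < ‖a‖)
    (hy' : |y'| ≤ ‖lam‖ * Real.cosh |y|)
    (hv' : |v'| ≥ ‖lam‖ * Real.sinh |v| - 2 * ‖a‖) :
    |v'| > |y'| + ‖a‖ := by
  set L := ‖lam‖
  set A := ‖a‖
  have hL : (0:ℝ) < L := by linarith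
  have hsinh_lt : Real.sinh (|y| + A) < Real.sinh |v| := Real.sinh_lt_sinh.2 hv
  have hadd : Real.sinh (|y| + A) = Real.sinh |y| * Real.cosh A + Real.cosh |y| * Real.sinh A :=
    Real.sinh_add _ _
  have h1 : Real.sinh |y| ≥ 0 := Real.sinh_nonneg_iff.2 (abs_nonneg y)
  have h2 : Real.cosh A ≥ 1 := Real.one_le_cosh A
  have h3 : Real.sinh A ≥ A := Real.self_le_sinh_iff.2 ha0.le
  have h4 : Real.cosh |y| - Real.sinh |y| = Real.exp (-|y|) := Real.cosh_sub_sinh |y|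
  nlinarith [mul_lt_mul_of_pos_left hsinh_lt hL,
    mul_le_mul_of_nonneg_left h3 (le_of_lt (mul_pos hL (by linarith : (0:ℝ) < Real.cosh |y|))),
    mul_le_mul_of_nonneg_right (le_of_lt hlam) (le_of_lt ha0),
    mul_nonneg hL.le h1, mul_nonneg (mul_nonneg hL.le h1) (by linarith : (0:ℝ) ≤ Real.cosh A - 1)]
end

section
/- Let λ ∈ ℂ, N ∈ ℕ with N > 3, and c₁ > 10 real, |λ| ≥ 1. If z₀ = x₀ + iy₀ satisfies sinh(|y₀|) > c₁N, and all iterates z_n = f_λ^n(z₀) of f_λ(z) = λ sin(z) remain in the strip {|Re(z)| < N}, then |Im(z_n)| > √(c₁^{2^n} − 1)·N for all n ≥ 1; in particular |z_n| → ∞. -/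
private lemma aux_sinh_le_abs_sin (z : ℂ) :
    Real.sinh |z.im| ≤ ‖Complex.sin z‖ := by
  have hdef : Complex.sin z
      = ((Complex.exp (-z * Complex.I) - Complex.exp (z * Complex.I)) * Complex.I) / 2 := rfl
  have h1 : ‖Complex.sin z‖
      = ‖Complex.exp (-z * Complex.I) - Complex.exp (z * Complex.I)‖ / 2 := by
    rw [hdef]; simp [map_div₀, map_mul]
  have ha : ‖Complex.exp (-z * Complex.I)‖ = Real.exp z.im := by
    rw [Complex.norm_exp]; congr 1; simp
  have hb : ‖Complex.exp (z * Complex.I)‖ = Real.exp (-z.im) := by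
    rw [Complex.norm_exp]; congr 1; simp
  have h2 : |Real.exp z.im - Real.exp (-z.im)|
      ≤ ‖Complex.exp (-z * Complex.I) - Complex.exp (z * Complex.I)‖ := by
    rw [← ha, ← hb]
    simpa using
      abs_norm_sub_norm_le (Complex.exp (-z * Complex.I)) (Complex.exp (z * Complex.I))
  have hs : Real.sinh |z.im| = |Real.exp z.im - Real.exp (-z.im)| / 2 := by
    rw [← Real.abs_sinh, Real.sinh_eq, abs_div]
    norm_num
  rw [hs, h1]
  linarith

private lemma aux_im_bound (w : ℂ) (c NR : ℝ) (hc : 1 < c) (hN : 0 < NR)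
    (habs : c * NR < ‖w‖) (hre : |w.re| < NR) :
    Real.sqrt (c ^ 2 - 1) * NR < |w.im| := by
  have hs : Real.sqrt (c ^ 2 - 1) ^ 2 = c ^ 2 - 1 :=
    Real.sq_sqrt (by nlinarith)
  have hsn : 0 ≤ Real.sqrt (c ^ 2 - 1) := Real.sqrt_nonneg _
  have hsq : (‖w‖) ^ 2 = w.re ^ 2 + w.im ^ 2 := by
    rw [Complex.sq_norm, Complex.normSq_apply]; ring
  have hcN : 0 < c * NR := by positivity
  have h1 : (c * NR) ^ 2 < (‖w‖) ^ 2 := by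
    nlinarith [norm_nonneg w]
  have h2 : w.re ^ 2 < NR ^ 2 := by nlinarith [sq_abs w.re, abs_nonneg w.re]
  have him2 : (c ^ 2 - 1) * NR ^ 2 < w.im ^ 2 := by nlinarith
  by_contra hcon
  push_neg at hcon
  nlinarith [sq_abs w.im, abs_nonneg w.im,
    mul_self_le_mul_self (abs_nonneg w.im) hcon]

private lemma aux_sinh_growth (c NR : ℝ) (hc : 10 < c) (hN : 4 ≤ NR) :
    c ^ 2 * NR ≤ Real.sinh (Real.sqrt (c ^ 2 - 1) * NR) := by
  set s := Real.sqrt (c ^ 2 - 1) with hs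
  have hs2 : s ^ 2 = c ^ 2 - 1 := Real.sq_sqrt (by nlinarith)
  have hs9 : 9 ≤ s := by
    have h81 : (9 : ℝ) = Real.sqrt 81 := by
      rw [show (81 : ℝ) = 9 ^ 2 by norm_num, Real.sqrt_sq (by norm_num)]
    rw [h81, hs]
    exact Real.sqrt_le_sqrt (by nlinarith)
  set α := s * NR with hα
  have hα36 : 36 ≤ α := by nlinarith
  have hexp3 : α / 3 + 1 ≤ Real.exp (α / 3) := Real.add_one_le_exp _
  have hcube : (α / 3 + 1) ^ 3 ≤ Real.exp α := by
    calc (α / 3 + 1) ^ 3 ≤ (Real.exp (α / 3)) ^ 3 :=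
          pow_le_pow_left₀ (by linarith) hexp3 3
      _ = Real.exp ((3 : ℕ) * (α / 3)) := by rw [Real.exp_nat_mul]
      _ = Real.exp α := by push_cast; ring_nf
  have hsinh : (Real.exp α - 1) / 2 ≤ Real.sinh α := by
    rw [Real.sinh_eq]
    have : Real.exp (-α) ≤ 1 := Real.exp_le_one_iff.mpr (by linarith)
    linarith
  have hcube' : α ^ 3 / 27 ≤ (α / 3 + 1) ^ 3 := by nlinarith
  have hnn : (0 : ℝ) ≤ (c ^ 2 - 1) * NR ^ 3 :=
    mul_nonneg (by nlinarith) (by positivity)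
  have hα3 : 9 * ((c ^ 2 - 1) * NR ^ 3) ≤ α ^ 3 := by
    have hcube3 : α ^ 3 = s ^ 2 * s * NR ^ 3 := by rw [hα]; ring
    rw [hcube3, hs2]
    nlinarith [mul_le_mul_of_nonneg_right hs9 hnn]
  have hNR2 : (16 : ℝ) ≤ NR ^ 2 := by nlinarith
  have hfin : 54 * (c ^ 2 * NR) + 27 ≤ 9 * ((c ^ 2 - 1) * NR ^ 3) := by
    nlinarith [mul_le_mul_of_nonneg_right hNR2
        (mul_nonneg (show (0 : ℝ) ≤ c ^ 2 - 1 by nlinarith) (show (0 : ℝ) ≤ NR by linarith)),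
      mul_nonneg (show (0 : ℝ) ≤ c ^ 2 - 100 by nlinarith)
        (show (0 : ℝ) ≤ NR by linarith)]
  linarith

theorem escape_estimate (lam : ℂ) (hlam : ‖lam‖ ≥ 1) (N : ℕ) (hN : N > 3)
    (c₁ : ℝ) (hc : c₁ > 10) (z₀ : ℂ)
    (h0 : Real.sinh |z₀.im| > c₁ * N)
    (hstrip : ∀ n : ℕ, |((fun z => lam * Complex.sin z)^[n] z₀).re| < N) :
    (∀ n : ℕ, n ≥ 1 →
      |((fun z => lam * Complex.sin z)^[n] z₀).im| > Real.sqrt (c₁ ^ (2 ^ n) - 1) * N) ∧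
    Filter.Tendsto (fun n : ℕ => ‖(fun z => lam * Complex.sin z)^[n] z₀‖)
      Filter.atTop Filter.atTop := by
  set g : ℂ → ℂ := fun z => lam * Complex.sin z with hg
  set z : ℕ → ℂ := fun n => g^[n] z₀ with hzdef
  have hNR : (4 : ℝ) ≤ (N : ℝ) := by exact_mod_cast hN
  have hNpos : (0 : ℝ) < (N : ℝ) := by linarith
  have hstep : ∀ n, Real.sinh |(z n).im| ≤ ‖z (n + 1)‖ := by
    intro n
    have hzn : z (n + 1) = g (z n) := by
      simp only [hzdef, Function.iterate_succ_apply']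
    rw [hzn]
    have h1 : Real.sinh |(z n).im| ≤ ‖Complex.sin (z n)‖ :=
      aux_sinh_le_abs_sin _
    have h2 : ‖g (z n)‖ = ‖lam‖ * ‖Complex.sin (z n)‖ := by
      simp [hg, map_mul]
    rw [h2]
    nlinarith [norm_nonneg (Complex.sin (z n))]
  have hB : ∀ n, c₁ ^ (2 ^ n) * (N : ℝ) < ‖z (n + 1)‖ := by
    intro n
    induction n with
    | zero =>
      simp only [pow_zero, pow_one]
      calc c₁ * (N : ℝ) < Real.sinh |z₀.im| := h0
        _ = Real.sinh |(z 0).im| := by simp [hzdef]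
        _ ≤ ‖z 1‖ := hstep 0
    | succ m ih =>
      have hcm : (10 : ℝ) < c₁ ^ (2 ^ m) :=
        lt_of_lt_of_le hc (le_self_pow₀ (by linarith) (by positivity))
      have him : Real.sqrt ((c₁ ^ (2 ^ m)) ^ 2 - 1) * (N : ℝ) < |(z (m + 1)).im| :=
        aux_im_bound (z (m + 1)) (c₁ ^ (2 ^ m)) N (by linarith) hNpos ih (hstrip (m + 1))
      have hPow : c₁ ^ (2 ^ (m + 1)) = (c₁ ^ (2 ^ m)) ^ 2 := by
        rw [← pow_mul, pow_succ]
      rw [hPow]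
      calc (c₁ ^ (2 ^ m)) ^ 2 * (N : ℝ)
          ≤ Real.sinh (Real.sqrt ((c₁ ^ (2 ^ m)) ^ 2 - 1) * (N : ℝ)) :=
            aux_sinh_growth _ _ hcm hNR
        _ < Real.sinh |(z (m + 1)).im| := Real.sinh_lt_sinh.mpr him
        _ ≤ ‖z (m + 2)‖ := hstep (m + 1)
  have hIm : ∀ n : ℕ, n ≥ 1 →
      |(z n).im| > Real.sqrt (c₁ ^ (2 ^ n) - 1) * (N : ℝ) := by
    intro n hn
    obtain ⟨m, rfl⟩ := Nat.exists_eq_add_of_le hn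
    have hcm : (10 : ℝ) < c₁ ^ (2 ^ m) :=
      lt_of_lt_of_le hc (le_self_pow₀ (by linarith) (by positivity))
    have habs : c₁ ^ (2 ^ m) * (N : ℝ) < ‖z (1 + m)‖ := by
      rw [Nat.add_comm 1 m]; exact hB m
    have him := aux_im_bound (z (1 + m)) (c₁ ^ (2 ^ m)) N (by linarith) hNpos habs
      (hstrip (1 + m))
    have hPow : (c₁ ^ (2 ^ m)) ^ 2 = c₁ ^ (2 ^ (1 + m)) := by
      rw [← pow_mul, Nat.add_comm 1 m, pow_succ]
    rwa [hPow] at him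
  refine ⟨hIm, ?_⟩
  have hmono : ∀ n : ℕ, n ≥ 1 → c₁ ^ n ≤ ‖z n‖ := by
    intro n hn
    obtain ⟨m, rfl⟩ := Nat.exists_eq_add_of_le hn
    rw [Nat.add_comm 1 m]
    have h2 : m + 1 ≤ 2 ^ m := Nat.lt_two_pow_self
    calc c₁ ^ (m + 1) ≤ c₁ ^ (2 ^ m) := pow_le_pow_right₀ (by linarith) h2
      _ ≤ c₁ ^ (2 ^ m) * (N : ℝ) := le_mul_of_one_le_right (by positivity) (by linarith)
      _ ≤ ‖z (m + 1)‖ := (hB m).le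
  refine Filter.tendsto_atTop_mono' _ ?_
    (tendsto_pow_atTop_atTop_of_one_lt (show (1 : ℝ) < c₁ by linarith))
  filter_upwards [Filter.eventually_ge_atTop 1] with n hn
  exact hmono n hn
end
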